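/- Let d ≥ 1 and let C₀ ⊆ ℝ^d be a compact convex set with 0 in its interior, and let C : ℝ^d → Set(ℝ^d) be the constant set-valued map C(x) = C₀ for all x. Then for all x, y ∈ ℝ^d the geodesic distance equals the Minkowski gauge of the displacement: d_C(x,y) = gauge_{C₀}(y − x), where gauge_{C₀}(v) = inf{t > 0 : v ∈ t·C₀}. -/

import Mathlib

open MeasureTheory ENNReal

/-- An admissible trajectory from `x` to `y` in time `T > 0` for the set-valued map `C`:
a Lipschitz curve `X : [0,T] → ℝ^d` with `X 0 = x`, `X T = y`, and derivative
`X'(t) ∈ C(X(t))` for a.e. `t ∈ [0,T]`. -/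
def IsAdmissibleTraj {d : ℕ} (C : EuclideanSpace ℝ (Fin d) → Set (EuclideanSpace ℝ (Fin d)))
    (x y : EuclideanSpace ℝ (Fin d)) (T : ℝ) : Prop :=
  0 < T ∧ ∃ X : ℝ → EuclideanSpace ℝ (Fin d),
    (∃ L : NNReal, LipschitzOnWith L X (Set.Icc 0 T)) ∧
    X 0 = x ∧ X T = y ∧
    ∀ᵐ t ∂(volume.restrict (Set.Icc 0 T)), ∃ v ∈ C (X t), HasDerivAt X v t

/-- The geodesic distance `d_C(x,y)`: the infimum of times of admissible trajectories
from `x` to `y` (equals `∞` if no admissible trajectory exists). -/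
noncomputable def geodDist {d : ℕ}
    (C : EuclideanSpace ℝ (Fin d) → Set (EuclideanSpace ℝ (Fin d)))
    (x y : EuclideanSpace ℝ (Fin d)) : ℝ≥0∞ :=
  ⨅ (T : ℝ) (_ : IsAdmissibleTraj C x y T), ENNReal.ofReal T


open Set Filter Topology

lemma seq_tendsto_pos : Tendsto (fun n : ℕ => 1 / ((n : ℝ) + 1)) atTop (𝓝[>] 0) := by
  refine tendsto_nhdsWithin_iff.2 ⟨tendsto_one_div_add_atTop_nhds_zero_nat, ?_⟩
  exact Eventually.of_forall fun n => Set.mem_Ioi.2 (by positivity)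

lemma lipschitz_ftc {E : Type*} [NormedAddCommGroup E] [NormedSpace ℝ E] [CompleteSpace E]
    (Y : ℝ → E) (L : NNReal) (hY : LipschitzWith L Y) {T : ℝ} (hT : 0 < T)
    (hd : ∀ᵐ t ∂(volume.restrict (Set.Ioo 0 T)), HasDerivAt Y (deriv Y t) t) :
    Integrable (deriv Y) (volume.restrict (Set.Ioo 0 T)) ∧
      ∫ t in Set.Ioo 0 T, deriv Y t = Y T - Y 0 := by
  set μ := volume.restrict (Set.Ioo 0 T) with hμ
  set h : ℕ → ℝ := fun n => 1 / ((n : ℝ) + 1) with hh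
  have hhpos : ∀ n, 0 < h n := fun n => by positivity
  set F : ℕ → ℝ → E := fun n t => (h n)⁻¹ • (Y (t + h n) - Y t) with hF
  have hcont : Continuous Y := hY.continuous
  have F_meas : ∀ n, AEStronglyMeasurable (F n) μ := fun n =>
    (((hcont.comp (continuous_id.add continuous_const)).sub hcont).const_smul _).aestronglyMeasurable
  have bound_int : Integrable (fun _ : ℝ => (L : ℝ)) μ := by
    rw [hμ]
    exact integrableOn_const (by simp [Real.volume_Ioo])
  have h_bound : ∀ n, ∀ᵐ t ∂μ, ‖F n t‖ ≤ (L : ℝ) := by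
    intro n
    refine Eventually.of_forall fun t => ?_
    have : ‖Y (t + h n) - Y t‖ ≤ (L : ℝ) * h n := by
      have := hY.dist_le_mul (t + h n) t
      simpa [dist_eq_norm, abs_of_pos (hhpos n)] using this
    calc ‖F n t‖ = (h n)⁻¹ * ‖Y (t + h n) - Y t‖ := by
          rw [hF, norm_smul, Real.norm_eq_abs, abs_of_pos (inv_pos.2 (hhpos n))]
      _ ≤ (h n)⁻¹ * ((L : ℝ) * h n) := by
          exact mul_le_mul_of_nonneg_left this (inv_pos.2 (hhpos n)).le
      _ = (L : ℝ) := by rw [mul_comm (L : ℝ), ← mul_assoc, inv_mul_cancel₀ (hhpos n).ne', one_mul]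
  have h_lim : ∀ᵐ t ∂μ, Tendsto (fun n => F n t) atTop (𝓝 (deriv Y t)) := by
    filter_upwards [hd] with t ht
    exact ht.tendsto_slope_zero_right.comp seq_tendsto_pos
  have key := tendsto_integral_of_dominated_convergence _ F_meas bound_int h_bound h_lim
  have hmeas : AEStronglyMeasurable (deriv Y) μ :=
    aestronglyMeasurable_of_tendsto_ae atTop F_meas h_lim
  have hint : Integrable (deriv Y) μ := by
    refine bound_int.mono' hmeas ?_
    have := ae_all_iff.2 h_bound
    filter_upwards [h_lim, this] with t ht hb
    exact le_of_tendsto (ht.norm) (Eventually.of_forall hb)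
  refine ⟨hint, ?_⟩
  -- now compute the other limit
  have hYint : ∀ a b : ℝ, IntervalIntegrable Y volume a b := fun a b => hcont.intervalIntegrable a b
  have hGT : HasDerivAt (fun u => ∫ s in T..u, Y s) (Y T) T :=
    intervalIntegral.integral_hasDerivAt_right (hYint T T)
      (hcont.stronglyMeasurableAtFilter _ _) hcont.continuousAt
  have hG0 : HasDerivAt (fun u => ∫ s in (0:ℝ)..u, Y s) (Y 0) 0 :=
    intervalIntegral.integral_hasDerivAt_right (hYint 0 0)
      (hcont.stronglyMeasurableAtFilter _ _) hcont.continuousAt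
  have limT : Tendsto (fun n => (h n)⁻¹ • (∫ s in T..(T + h n), Y s)) atTop (𝓝 (Y T)) := by
    have := hGT.tendsto_slope_zero_right.comp seq_tendsto_pos
    simpa [Function.comp_def, hh, one_div, intervalIntegral.integral_same] using this
  have lim0 : Tendsto (fun n => (h n)⁻¹ • (∫ s in (0:ℝ)..(h n), Y s)) atTop (𝓝 (Y 0)) := by
    have := hG0.tendsto_slope_zero_right.comp seq_tendsto_pos
    simpa [Function.comp_def, hh, one_div, intervalIntegral.integral_same] using this
  have Feq : ∀ n, ∫ t, F n t ∂μ =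
      (h n)⁻¹ • ((∫ s in T..(T + h n), Y s) - ∫ s in (0:ℝ)..(h n), Y s) := by
    intro n
    have i1 : IntegrableOn (fun t => Y (t + h n)) (Set.Ioo 0 T) volume :=
      ((hcont.comp (continuous_id.add continuous_const)).integrableOn_Icc.mono_set
        Set.Ioo_subset_Icc_self)
    have i2 : IntegrableOn Y (Set.Ioo 0 T) volume := hcont.integrableOn_Icc.mono_set Set.Ioo_subset_Icc_self
    rw [hμ]
    calc ∫ t in Set.Ioo 0 T, F n t
        = (h n)⁻¹ • ((∫ t in Set.Ioo 0 T, Y (t + h n)) - ∫ t in Set.Ioo 0 T, Y t) := by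
          simp_rw [hF]
          rw [integral_smul, integral_sub i1 i2]
      _ = (h n)⁻¹ • ((∫ t in (0:ℝ)..T, Y (t + h n)) - ∫ t in (0:ℝ)..T, Y t) := by
          rw [intervalIntegral.integral_of_le hT.le, intervalIntegral.integral_of_le hT.le,
            integral_Ioc_eq_integral_Ioo, integral_Ioc_eq_integral_Ioo]
      _ = (h n)⁻¹ • ((∫ s in T..(T + h n), Y s) - ∫ s in (0:ℝ)..(h n), Y s) := by
          congr 1
          rw [intervalIntegral.integral_comp_add_right, zero_add]
          have e1 : ∫ s in (h n)..(T + h n), Y s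
              = (∫ s in (h n)..T, Y s) + ∫ s in T..(T + h n), Y s :=
            (intervalIntegral.integral_add_adjacent_intervals (hYint _ _) (hYint _ _)).symm
          have e2 : ∫ s in (0:ℝ)..T, Y s
              = (∫ s in (0:ℝ)..(h n), Y s) + ∫ s in (h n)..T, Y s :=
            (intervalIntegral.integral_add_adjacent_intervals (hYint _ _) (hYint _ _)).symm
          rw [e1, e2]; abel
  have key2 : Tendsto (fun n => ∫ t, F n t ∂μ) atTop (𝓝 (Y T - Y 0)) := by
    simp_rw [Feq, smul_sub]
    exact limT.sub lim0
  have := tendsto_nhds_unique key key2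
  rw [hμ] at this ⊢
  exact this


theorem stmt_3 (d : ℕ) (hd : 1 ≤ d) (C₀ : Set (EuclideanSpace ℝ (Fin d)))
    (hcomp : IsCompact C₀) (hconv : Convex ℝ C₀) (h0 : (0 : EuclideanSpace ℝ (Fin d)) ∈ interior C₀) :
    ∀ x y : EuclideanSpace ℝ (Fin d),
      geodDist (fun _ => C₀) x y = ENNReal.ofReal (gauge C₀ (y - x)) := by
  intro x y
  set g := gauge C₀ (y - x) with hg
  have habs : Absorbent ℝ C₀ := absorbent_nhds_zero (mem_interior_iff_mem_nhds.1 h0)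
  have h0m : (0 : EuclideanSpace ℝ (Fin d)) ∈ C₀ := interior_subset h0
  have hclosed := hcomp.isClosed
  have hg0 : 0 ≤ g := gauge_nonneg _
  apply le_antisymm
  · -- upper bound
    refine ENNReal.le_of_forall_pos_le_add fun ε hε _ => ?_
    set T := g + (ε : ℝ) with hTdef
    have hεpos : (0:ℝ) < ε := hε
    have hT : 0 < T := by positivity
    have hglt : g < T := lt_add_of_pos_right _ hεpos
    set v := T⁻¹ • (y - x) with hv
    have hvC : v ∈ C₀ := by
      apply gauge_lt_one_subset_self hconv h0m habs
      have hgv : gauge C₀ v = T⁻¹ * g := by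
        rw [hv, gauge_smul_of_nonneg (inv_nonneg.2 hT.le), smul_eq_mul]
      have : T⁻¹ * g < T⁻¹ * T := mul_lt_mul_of_pos_left hglt (inv_pos.2 hT)
      rw [inv_mul_cancel₀ hT.ne'] at this
      exact Set.mem_setOf_eq ▸ (hgv ▸ this)
    have traj : IsAdmissibleTraj (fun _ => C₀) x y T := by
      refine ⟨hT, fun t => x + t • v, ⟨‖v‖₊, ?_⟩, by simp, ?_, ?_⟩
      · apply LipschitzWith.lipschitzOnWith
        refine LipschitzWith.of_dist_le_mul fun s t => ?_
        have : (x + s • v) - (x + t • v) = (s - t) • v := by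
          rw [add_sub_add_left_eq_sub, ← sub_smul]
        rw [dist_eq_norm, this, norm_smul, coe_nnnorm, dist_eq_norm, mul_comm]
      · show x + T • v = y
        rw [hv, smul_smul, mul_inv_cancel₀ hT.ne', one_smul, add_sub_cancel]
      · refine Eventually.of_forall fun t => ⟨v, hvC, ?_⟩
        simpa using ((hasDerivAt_id t).smul_const v).const_add x
    calc geodDist (fun _ => C₀) x y ≤ ENNReal.ofReal T := iInf₂_le T traj
      _ ≤ ENNReal.ofReal g + (ε : ℝ≥0∞) := by
        rw [hTdef, ENNReal.ofReal_add hg0 hεpos.le, ENNReal.ofReal_coe_nnreal]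
  · -- lower bound
    refine le_iInf₂ fun T hadm => ?_
    obtain ⟨hT, X, ⟨L, hL⟩, hX0, hXT, hae⟩ := hadm
    apply ENNReal.ofReal_le_ofReal
    set Y : ℝ → EuclideanSpace ℝ (Fin d) := fun t => X (Set.projIcc 0 T hT.le t) with hY
    have hYlip : LipschitzWith L Y := by
      have := hL.to_restrict.comp (LipschitzWith.projIcc hT.le)
      rw [mul_one] at this
      exact this
    have hYT : Y T = y := by rw [hY]; simp [Set.projIcc_right, hXT]
    have hY0 : Y 0 = x := by rw [hY]; simp [Set.projIcc_left, hX0]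
    have haeIoo : ∀ᵐ t ∂(volume.restrict (Set.Ioo 0 T)),
        HasDerivAt Y (deriv Y t) t ∧ deriv Y t ∈ C₀ := by
      have h1 := ae_restrict_of_ae_restrict_of_subset Set.Ioo_subset_Icc_self hae
      filter_upwards [h1, ae_restrict_mem measurableSet_Ioo] with t ht htt
      obtain ⟨w, hwC, hdX⟩ := ht
      have heq : Y =ᶠ[nhds t] X := by
        filter_upwards [isOpen_Ioo.mem_nhds htt] with s hs
        rw [hY]
        simp [Set.projIcc_of_mem hT.le ⟨hs.1.le, hs.2.le⟩]
      have hdY : HasDerivAt Y w t := hdX.congr_of_eventuallyEq heq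
      have hw : deriv Y t = w := hdY.deriv
      exact ⟨hw ▸ hdY, hw ▸ hwC⟩
    obtain ⟨hint, hftc⟩ := lipschitz_ftc Y L hYlip hT (haeIoo.mono fun t h => h.1)
    have havg : (⨍ t in Set.Ioo 0 T, deriv Y t) ∈ C₀ := by
      refine hconv.set_average_mem hclosed ?_ (by simp [Real.volume_Ioo])
        (haeIoo.mono fun t h => h.2) hint
      simp [Real.volume_Ioo, hT, hT.ne']
    have havg' : T⁻¹ • (y - x) ∈ C₀ := by
      have : (⨍ t in Set.Ioo 0 T, deriv Y t) = T⁻¹ • (y - x) := by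
        rw [setAverage_eq, hftc, hYT, hY0, Real.volume_real_Ioo_of_le hT.le, sub_zero]
      rwa [this] at havg
    have h2 : gauge C₀ (T • (T⁻¹ • (y - x))) ≤ T := by
      rw [gauge_smul_of_nonneg hT.le, smul_eq_mul]
      calc T * gauge C₀ (T⁻¹ • (y - x)) ≤ T * 1 :=
            mul_le_mul_of_nonneg_left (gauge_le_one_of_mem havg') hT.le
        _ = T := mul_one T
    rwa [smul_smul, mul_inv_cancel₀ hT.ne', one_smul] at h2
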